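/- If there exists a nontrivial strongly regular graph with parameters (n, k, λ, μ), then the two real numbers (1/2)·(n − 1 − ((n−1)(λ−μ) + 2k)/√((λ−μ)² + 4(k−μ))) and (1/2)·(n − 1 + ((n−1)(λ−μ) + 2k)/√((λ−μ)² + 4(k−μ))) are both nonnegative integers. -/

import Mathlib

open SimpleGraph Finset Matrix

private lemma trace_idem_aux {V : Type} [Fintype V] [DecidableEq V] (M : Matrix V V ℝ)
    (h : M * M = M) : ∃ m : ℕ, Matrix.trace M = m := by
  have hf : Matrix.toLin' M ∘ₗ Matrix.toLin' M = Matrix.toLin' M := by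
    rw [← Matrix.toLin'_mul, h]
  obtain ⟨p, hp⟩ := (LinearMap.isProj_iff_isIdempotentElem _).mpr hf
  refine ⟨Module.finrank ℝ p, ?_⟩
  have ht := hp.trace
  rw [LinearMap.trace_eq_matrix_trace ℝ (Pi.basisFun ℝ V),
    LinearMap.toMatrix_eq_toMatrix', LinearMap.toMatrix'_toLin'] at ht
  exact ht

private lemma mul_expand {V : Type} [Fintype V] [DecidableEq V] (A : Matrix V V ℝ) (x y : ℝ) :
    (A - x • 1) * (A - y • 1) = A * A - (x + y) • A + (x * y) • (1 : Matrix V V ℝ) := by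
  simp only [sub_mul, mul_sub, Matrix.smul_mul, Matrix.mul_smul, Matrix.one_mul, Matrix.mul_one,
    smul_smul]
  module

/-- If there exists a nontrivial strongly regular graph with parameters `(n, k, l, μ)`,
then the two real numbers
`(1/2)·(n − 1 ∓ ((n−1)(l−μ) + 2k)/√((l−μ)² + 4(k−μ)))` are nonnegative integers. -/
theorem srg_eigenvalue_multiplicities (n k l μ : ℕ)
    (h : ∃ (V : Type) (_ : Fintype V) (G : SimpleGraph V) (_ : DecidableRel G.Adj),
      G.IsSRGWith n k l μ)
    (hk : 0 < k) (hkn : k < n - 1) :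
    (∃ m : ℕ, (m : ℝ) =
      (1 / 2) * ((n : ℝ) - 1 -
        (((n : ℝ) - 1) * ((l : ℝ) - (μ : ℝ)) + 2 * (k : ℝ)) /
          Real.sqrt (((l : ℝ) - (μ : ℝ)) ^ 2 + 4 * ((k : ℝ) - (μ : ℝ))))) ∧
    (∃ m : ℕ, (m : ℝ) =
      (1 / 2) * ((n : ℝ) - 1 +
        (((n : ℝ) - 1) * ((l : ℝ) - (μ : ℝ)) + 2 * (k : ℝ)) /
          Real.sqrt (((l : ℝ) - (μ : ℝ)) ^ 2 + 4 * ((k : ℝ) - (μ : ℝ))))) := by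
  classical
  obtain ⟨V, _, G, _, hsrg⟩ := h
  -- combinatorial facts
  have hcard : Fintype.card V = n := hsrg.card
  have hne : Nonempty V := by rw [← Fintype.card_pos_iff, hcard]; omega
  obtain ⟨v⟩ := hne
  have hdeg : ∀ x : V, G.degree x = k := hsrg.regular
  obtain ⟨w, hvw⟩ : ∃ w, G.Adj v w :=
    (G.degree_pos_iff_exists_adj v).mp (by rw [hdeg v]; exact hk)
  have hlk : l < k := by
    have := hvw.card_commonNeighbors_lt_degree
    rwa [hsrg.of_adj v w hvw, hdeg] at this
  have hμk : μ ≤ k := by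
    obtain ⟨u, hu⟩ : ∃ u, u ∉ insert v (G.neighborFinset v) := by
      by_contra hc
      push_neg at hc
      have h1 : Fintype.card V ≤ (insert v (G.neighborFinset v)).card := by
        rw [← Finset.card_univ]
        exact Finset.card_le_card (fun x _ => hc x)
      have h2 : (insert v (G.neighborFinset v)).card ≤ k + 1 := by
        refine (Finset.card_insert_le _ _).trans ?_
        rw [G.card_neighborFinset_eq_degree, hdeg]
      omega
    simp only [Finset.mem_insert, not_or] at hu
    have hna : ¬ G.Adj v u := fun hadj => hu.2 ((G.mem_neighborFinset v u).mpr hadj)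
    have hmu := hsrg.of_not_adj (Ne.symm hu.1) hna
    have hle := G.card_commonNeighbors_le_degree_left v u
    rw [hmu, hdeg] at hle
    exact hle
  -- real abbreviations
  set N : ℝ := (n : ℝ) with hN
  set K : ℝ := (k : ℝ) with hK
  set a : ℝ := (l : ℝ) with ha
  set b : ℝ := (μ : ℝ) with hb
  have hKa : a + 1 ≤ K := by rw [ha, hK]; exact_mod_cast hlk
  have hKN : K + 2 ≤ N := by rw [hK, hN]; exact_mod_cast (by omega : k + 2 ≤ n)
  have hK0 : 0 < K := by rw [hK]; exact_mod_cast hk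
  have hbK : b ≤ K := by rw [hb, hK]; exact_mod_cast hμk
  have hb0 : 0 ≤ b := by rw [hb]; positivity
  have hN0 : 0 < N := by linarith
  set D : ℝ := (a - b) ^ 2 + 4 * (K - b) with hD
  have hDpos : 0 < D := by
    rcases lt_or_eq_of_le hbK with hlt | heq
    · nlinarith [sq_nonneg (a - b)]
    · nlinarith
  have hsd2 : Real.sqrt D ^ 2 = D := Real.sq_sqrt hDpos.le
  have hsd0 : 0 < Real.sqrt D := Real.sqrt_pos.mpr hDpos
  set sd : ℝ := Real.sqrt D with hsd
  -- matrices
  set A : Matrix V V ℝ := G.adjMatrix ℝ with hA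
  set J : Matrix V V ℝ := Matrix.of (fun _ _ => (1:ℝ)) with hJdef
  have hC : Gᶜ.adjMatrix ℝ = J - 1 - A := by
    ext i j
    simp only [adjMatrix_apply, compl_adj, Matrix.sub_apply, Matrix.one_apply, hJdef,
      Matrix.of_apply, hA]
    by_cases hij : i = j
    · simp [hij]
    · by_cases hadj : G.Adj i j <;> simp [hij, hadj]
  have hAJ : A * J = K • J := by
    ext i j
    simp only [hA, hJdef, Matrix.smul_apply, Matrix.of_apply, smul_eq_mul, mul_one]
    rw [adjMatrix_mul_apply]
    simp only [Matrix.of_apply]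
    rw [Finset.sum_const, G.card_neighborFinset_eq_degree, hdeg i]
    simp [hK]
  have hJA : J * A = K • J := by
    ext i j
    simp only [hA, hJdef, Matrix.smul_apply, Matrix.of_apply, smul_eq_mul, mul_one]
    rw [mul_adjMatrix_apply]
    simp only [Matrix.of_apply]
    rw [Finset.sum_const, G.card_neighborFinset_eq_degree, hdeg j]
    simp [hK]
  have hA2 := hsrg.matrix_eq (α := ℝ)
  have hquad : A * A = (a - b) • A + (K - b) • (1 : Matrix V V ℝ) + b • J := by
    rw [← sq, hA2, hC]
    simp only [← Nat.cast_smul_eq_nsmul ℝ, ← hA, ← hK, ← ha, ← hb]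
    module
  have htrA : Matrix.trace A = 0 := by simp [hA]
  have htr1 : Matrix.trace (1 : Matrix V V ℝ) = N := by
    simp [Matrix.trace_one, hcard, hN]
  have htrJ : Matrix.trace J = N := by
    simp [hJdef, Matrix.trace, Matrix.diag, hcard, hN]
  have htrA2 : Matrix.trace (A * A) = K * N := by
    rw [hquad]
    simp only [Matrix.trace_add, Matrix.trace_smul, htrA, htr1, htrJ, smul_eq_mul]
    ring
  -- two cases on μ
  rcases Nat.eq_zero_or_pos μ with hμ0 | hμpos
  · -- disjoint union of cliques: μ = 0, l = k - 1
    have hl1 : l + 1 = k := by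
      have hsub : (G.neighborFinset v).erase w ⊆ (G.commonNeighbors v w).toFinset := by
        intro u hu
        rw [Finset.mem_erase, G.mem_neighborFinset] at hu
        obtain ⟨huw, hvu⟩ := hu
        rw [Set.mem_toFinset]
        refine ⟨hvu, ?_⟩
        show G.Adj w u
        by_contra hnadj
        have hcard0 := hsrg.of_not_adj (fun h : w = u => huw h.symm) hnadj
        rw [hμ0] at hcard0
        have hvmem : v ∈ G.commonNeighbors w u := ⟨hvw.symm, hvu.symm⟩
        have : 0 < Fintype.card (G.commonNeighbors w u) := by
          rw [Fintype.card_pos_iff]; exact ⟨⟨v, hvmem⟩⟩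
        omega
      have hcards : ((G.neighborFinset v).erase w).card ≤ (G.commonNeighbors v w).toFinset.card :=
        Finset.card_le_card hsub
      rw [Finset.card_erase_of_mem ((G.mem_neighborFinset v w).mpr hvw),
        G.card_neighborFinset_eq_degree, hdeg, Set.toFinset_card, hsrg.of_adj v w hvw] at hcards
      omega
    have hbz : b = 0 := by rw [hb, hμ0]; simp
    have haK : a = K - 1 := by
      rw [ha, hK, ← hl1]; push_cast; ring
    have hsdK : sd = K + 1 := by
      rw [hsd, hD, hbz, haK]
      rw [show (K - 1 - 0) ^ 2 + 4 * (K - 0) = (K + 1) ^ 2 by ring]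
      rw [Real.sqrt_sq (by linarith)]
    have hK1 : K + 1 ≠ 0 := by linarith
    have hquad0 : A * A = (K - 1) • A + K • (1 : Matrix V V ℝ) := by
      rw [hquad, hbz, haK]; simp
    have hsq : (A + 1) * (A + 1) = (K + 1) • (A + 1) := by
      have : (A + 1) * (A + 1) = A * A + 2 • A + 1 := by
        simp only [add_mul, mul_add, Matrix.one_mul, Matrix.mul_one]
        module
      rw [this, hquad0]
      have h2 : (2 : ℕ) • A = (2 : ℝ) • A := by
        rw [← Nat.cast_smul_eq_nsmul ℝ]; norm_num
      rw [h2]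
      have hone : (1 : Matrix V V ℝ) = (1 : ℝ) • (1 : Matrix V V ℝ) := by simp
      nth_rewrite 3 [hone]
      rw [smul_add]
      module
    set P : Matrix V V ℝ := (K + 1)⁻¹ • (A + 1) with hP
    have hPP : P * P = P := by
      rw [hP, Matrix.smul_mul, Matrix.mul_smul, hsq, smul_smul, smul_smul]
      congr 1
      field_simp
    obtain ⟨m, hm⟩ := trace_idem_aux P hPP
    have htrP : Matrix.trace P = N / (K + 1) := by
      rw [hP, Matrix.trace_smul, Matrix.trace_add, htrA, htr1]
      simp [div_eq_inv_mul]
    have hmval : (m : ℝ) = N / (K + 1) := by rw [← hm, htrP]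
    have hm1 : 1 ≤ m := by
      by_contra hc
      push_neg at hc
      interval_cases m
      rw [Nat.cast_zero] at hmval
      have : N / (K + 1) > 0 := by positivity
      linarith
    constructor
    · refine ⟨m - 1, ?_⟩
      have hcast : ((m - 1 : ℕ) : ℝ) = (m : ℝ) - 1 := by
        have := Nat.cast_sub hm1 (R := ℝ)
        simpa using this
      rw [hcast, hmval, hsdK, hbz, haK]
      field_simp
      ring
    · refine ⟨m * k, ?_⟩
      have hcast : ((m * k : ℕ) : ℝ) = (m : ℝ) * K := by push_cast [hK]; ring
      rw [hcast, hmval, hsdK, hbz, haK]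
      field_simp
      ring
  · -- μ > 0
    have hb1 : 1 ≤ b := by rw [hb]; exact_mod_cast hμpos
    obtain ⟨d, hd⟩ : ∃ d, k = l + 1 + d := ⟨k - l - 1, by omega⟩
    obtain ⟨e, he⟩ : ∃ e, n = k + 1 + e := ⟨n - k - 1, by omega⟩
    have hp' : k * d = e * μ := by
      have hp := hsrg.param_eq G (by omega)
      have h1 : k - l - 1 = d := by omega
      have h2 : n - k - 1 = e := by omega
      rwa [h1, h2] at hp
    have hparam : K * (K - a - 1) = (N - K - 1) * b := by
      have h1 : K - a - 1 = (d : ℝ) := by rw [hK, ha, hd]; push_cast; ring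
      have h2 : N - K - 1 = (e : ℝ) := by rw [hN, hK, he]; push_cast; ring
      rw [h1, h2, hK, hb]
      exact_mod_cast hp'
    set r : ℝ := ((a - b) + sd) / 2 with hr
    set s : ℝ := ((a - b) - sd) / 2 with hs
    have hsum : r + s = a - b := by rw [hr, hs]; ring
    have hdiff : r - s = sd := by rw [hr, hs]; ring
    have hprod : r * s = b - K := by
      have : r * s = ((a - b) ^ 2 - sd ^ 2) / 4 := by rw [hr, hs]; ring
      rw [this, hsd2, hD]; ring
    -- K is not a root of the quadratic
    have hKroot : (K - r) * (K - s) = b * N := by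
      have h1 : (K - r) * (K - s) = K ^ 2 - (r + s) * K + r * s := by ring
      rw [h1, hsum, hprod]
      linear_combination hparam
    have hbN : (0 : ℝ) < b * N := by positivity
    have hrK : r - K ≠ 0 := by
      intro hc
      have h0 : K - r = 0 := by linarith
      rw [h0, zero_mul] at hKroot
      linarith
    have hsK : s - K ≠ 0 := by
      intro hc
      have h0 : K - s = 0 := by linarith
      rw [h0, mul_zero] at hKroot
      linarith
    have hrs : r - s ≠ 0 := by rw [hdiff]; exact hsd0.ne'
    have hsr : s - r ≠ 0 := by
      intro hc
      apply hrs
      linarith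
    -- factorization of the quadratic identity
    have hfact : (A - r • 1) * (A - s • 1) = b • J := by
      rw [mul_expand, hquad, hsum, hprod]
      module
    have hzero : (A - r • 1) * ((A - s • 1) * (A - K • 1)) = 0 := by
      rw [← Matrix.mul_assoc, hfact, Matrix.smul_mul, Matrix.mul_sub, Matrix.mul_smul, hJA,
        Matrix.mul_one]
      simp
    have hzero' : (A - s • 1) * ((A - r • 1) * (A - K • 1)) = 0 := by
      rw [← Matrix.mul_assoc, mul_expand, show s + r = r + s by ring, show s * r = r * s by ring,
        ← mul_expand, hfact, Matrix.smul_mul, Matrix.mul_sub, Matrix.mul_smul, hJA,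
        Matrix.mul_one]
      simp
    -- the two projections
    have key : ∀ x y : ℝ, (A - x • 1) * ((A - y • 1) * (A - K • 1)) = 0 → x - y ≠ 0 →
        x - K ≠ 0 →
        ∃ m : ℕ, (m : ℝ) = K * N * (1 + y) / ((x - y) * (x - K)) := by
      intro x y hz hxy hxK
      set M1 : Matrix V V ℝ := (A - y • 1) * (A - K • 1) with hM1
      have hAM1 : A * M1 = x • M1 := by
        have h1 : A * M1 - x • M1 = (A - x • 1) * M1 := by
          rw [Matrix.sub_mul, Matrix.smul_mul, Matrix.one_mul]
        have h2 : (A - x • 1) * M1 = 0 := by rw [hM1]; exact hz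
        exact sub_eq_zero.mp (h1.trans h2)
      have hKM1 : (A - K • 1) * M1 = (x - K) • M1 := by
        rw [Matrix.sub_mul, Matrix.smul_mul, Matrix.one_mul, hAM1, sub_smul]
      have hyM1 : (A - y • 1) * ((A - K • 1) * M1) = ((x - y) * (x - K)) • M1 := by
        rw [hKM1, Matrix.mul_smul, Matrix.sub_mul, Matrix.smul_mul, Matrix.one_mul, hAM1,
          ← sub_smul, smul_smul, mul_comm (x - K)]
      have hM1M1 : M1 * M1 = ((x - y) * (x - K)) • M1 := by
        have h1 : M1 * M1 = (A - y • 1) * ((A - K • 1) * M1) := by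
          rw [hM1, Matrix.mul_assoc]
        rw [h1, hyM1]
      have hc0 : (x - y) * (x - K) ≠ 0 := mul_ne_zero hxy hxK
      set P1 : Matrix V V ℝ := ((x - y) * (x - K))⁻¹ • M1 with hP1
      have hPP : P1 * P1 = P1 := by
        rw [hP1, Matrix.smul_mul, Matrix.mul_smul, hM1M1, smul_smul, smul_smul]
        congr 1
        field_simp
      obtain ⟨m, hm⟩ := trace_idem_aux P1 hPP
      refine ⟨m, ?_⟩
      have htrM1 : Matrix.trace M1 = K * N * (1 + y) := by
        rw [hM1, mul_expand, Matrix.trace_add, Matrix.trace_sub, Matrix.trace_smul,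
          Matrix.trace_smul, htrA, htr1, htrA2]
        simp only [smul_eq_mul, mul_zero]
        ring
      rw [← hm, hP1, Matrix.trace_smul, htrM1]
      simp only [smul_eq_mul]
      field_simp
    constructor
    · obtain ⟨m, hm⟩ := key r s hzero hrs hrK
      refine ⟨m, ?_⟩
      clear_value r s
      rw [hm, ← hdiff]
      field_simp
      linear_combination (2 * (N - 1)) * hprod - 2 * hparam +
        (2 * K) * hsum - ((N - 1) * (r - K)) * hsum
    · obtain ⟨m, hm⟩ := key s r hzero' hsr hsK
      refine ⟨m, ?_⟩
      rw [hm, ← hdiff]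
      field_simp
      linear_combination (2 * (r - s) * (N - 1)) * hprod - (2 * (r - s)) * hparam -
        (2 * (r - s) * K) * hsum + ((N - 1) * (s - r) * (s - K)) * hsum

-- check axioms
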